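/- For all t ∈ (0, 1], the function h_{12}(t) = -2·ln(t^2/6 + 1) - t^2·(t^6 - 135t^2 - 1620)/((t^2 + 6)(t^6 + 135t^2 + 810)) is negative, i.e., h_{12}(t) < 0 for all t > 0. -/

import Mathlib

theorem h12_neg (t : ℝ) (ht : 0 < t) :
    -2 * Real.log (t ^ 2 / 6 + 1) -
      t ^ 2 * (t ^ 6 - 135 * t ^ 2 - 1620) /
        ((t ^ 2 + 6) * (t ^ 6 + 135 * t ^ 2 + 810)) < 0 := by
  have hd1 : (0:ℝ) < t ^ 2 + 6 := by positivity
  have hd2 : (0:ℝ) < t ^ 6 + 135 * t ^ 2 + 810 := by positivity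
  have hy : (0:ℝ) < t ^ 2 / 6 + 1 := by positivity
  have hlog : t ^ 2 / (t ^ 2 + 6) ≤ Real.log (t ^ 2 / 6 + 1) := by
    have h := Real.log_le_sub_one_of_pos (inv_pos.mpr hy)
    rw [Real.log_inv] at h
    have hq : t ^ 2 / (t ^ 2 + 6) = 1 - (t ^ 2 / 6 + 1)⁻¹ := by
      field_simp
      ring
    rw [hq]
    linarith
  have key : -2 * (t ^ 2 / (t ^ 2 + 6)) -
      t ^ 2 * (t ^ 6 - 135 * t ^ 2 - 1620) /
        ((t ^ 2 + 6) * (t ^ 6 + 135 * t ^ 2 + 810)) < 0 := by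
    have hD : (0:ℝ) < (t ^ 2 + 6) * (t ^ 6 + 135 * t ^ 2 + 810) := mul_pos hd1 hd2
    rw [show -2 * (t ^ 2 / (t ^ 2 + 6)) -
      t ^ 2 * (t ^ 6 - 135 * t ^ 2 - 1620) /
        ((t ^ 2 + 6) * (t ^ 6 + 135 * t ^ 2 + 810)) =
      (-2 * (t ^ 2 * (t ^ 6 + 135 * t ^ 2 + 810)) -
        t ^ 2 * (t ^ 6 - 135 * t ^ 2 - 1620)) /
        ((t ^ 2 + 6) * (t ^ 6 + 135 * t ^ 2 + 810)) by
      field_simp]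
    apply div_neg_of_neg_of_pos _ hD
    nlinarith [pow_pos ht 8, pow_pos ht 4, pow_pos ht 2]
  nlinarith [hlog, key]
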